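/- Let $G$ be a compact group with probabilistic Haar measure $\mu$, and $G_0 \trianglelefteq G$ an open normal subgroup with probabilistic Haar measure $\mu_0$ and inclusion $j: G_0 \to G$. Let $(x_n)$ be a sequence in the space of conjugacy classes $X(G)$ that is equidistributed with respect to the measure induced by $\mu$. Let $k_n$ be the number of indices $i \le n$ with $x_i$ in the image of $X(j): X(G_0) \to X(G)$, and assume $\lim_{n\to\infty} k_n/n = 1/[G:G_0]$. Then the subsequence $(x_{n_k})$ of elements contained in the image of $X(j)$ is equidistributed with respect to the pushforward measure $j_*\mu_0$. -/

import Mathlib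

attribute [local instance] Classical.propDecidable

open MeasureTheory Filter

/-- `G` compact with probability Haar measure `μ`, `G₀ ⊴ G` open normal with
probability Haar measure `μ₀` and inclusion `j : G₀ → G`.  Conjugacy classes and
equidistribution are expressed through continuous class functions; since `G₀` is normal,
a class lies in the image of `X(j) : X(G₀) → X(G)` iff its representative lies in `G₀`.
If the sequence `(x_n)` of classes is equidistributed for `μ` and the proportion
`k_n/n` of terms lying in the image of `X(j)` tends to `1/[G:G₀]`, then the subsequence of
terms lying in the image of `X(j)` is equidistributed for the pushforward `j_* μ₀`. -/
theorem stmt_13 {G : Type*} [Group G] [TopologicalSpace G] [IsTopologicalGroup G]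
    [CompactSpace G] [MeasurableSpace G] [BorelSpace G]
    (μ : Measure G) [μ.IsHaarMeasure] [IsProbabilityMeasure μ]
    (G₀ : Subgroup G) [G₀.Normal] (hopen : IsOpen (G₀ : Set G))
    (μ₀ : Measure G₀) [μ₀.IsHaarMeasure] [IsProbabilityMeasure μ₀]
    (x : ℕ → G)
    (hequi : ∀ f : G → ℂ, Continuous f → (∀ g h : G, f (h * g * h⁻¹) = f g) →
      Tendsto (fun N : ℕ => (N : ℂ)⁻¹ * ∑ i ∈ Finset.range N, f (x i))
        atTop (nhds (∫ g, f g ∂μ)))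
    (hprop : Tendsto
      (fun N : ℕ => (((Finset.range N).filter fun i => x i ∈ G₀).card : ℝ) / (N : ℝ))
      atTop (nhds (1 / (G₀.index : ℝ)))) :
    ∀ f : G → ℂ, Continuous f → (∀ g h : G, f (h * g * h⁻¹) = f g) →
      Tendsto (fun N : ℕ =>
          ((((Finset.range N).filter fun i => x i ∈ G₀).card : ℂ))⁻¹ *
            ∑ i ∈ (Finset.range N).filter fun i => x i ∈ G₀, f (x i))
        atTop (nhds (∫ g, f g ∂(μ₀.map Subtype.val))) := by
  have hG0meas : MeasurableSet (G₀ : Set G) := hopen.measurableSet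
  have hclosed : IsClosed (G₀ : Set G) := Subgroup.isClosed_of_isOpen G₀ hopen
  haveI : CompactSpace G₀ := isCompact_iff_compactSpace.mp hclosed.isCompact
  haveI : BorelSpace G₀ := Subtype.borelSpace (G₀ : Set G)
  have hemb : MeasurableEmbedding ((↑) : G₀ → G) := MeasurableEmbedding.subtype_coe hG0meas
  have hfr : frontier {a : G | a ∈ G₀} = (∅ : Set G) := by
    have : IsClopen (G₀ : Set G) := ⟨hclosed, hopen⟩
    simpa using this.frontier_eq
  -- a general equidistribution result for truncated class functions
  have keyInd : ∀ f : G → ℂ, Continuous f → (∀ g h : G, f (h * g * h⁻¹) = f g) →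
      Tendsto (fun N : ℕ => (N : ℂ)⁻¹ *
          ∑ i ∈ Finset.range N, (if x i ∈ G₀ then f (x i) else 0))
        atTop (nhds (∫ g in (G₀ : Set G), f g ∂μ)) := by
    intro f hf hcl
    have hcont : Continuous (fun g : G => if g ∈ G₀ then f g else 0) := by
      apply Continuous.if _ hf continuous_const
      rw [hfr]; intro a ha; exact absurd ha (Set.notMem_empty a)
    have hcl' : ∀ g h : G, (fun g : G => if g ∈ G₀ then f g else 0) (h * g * h⁻¹)
        = (fun g : G => if g ∈ G₀ then f g else 0) g := by
      intro g h
      have hmem : h * g * h⁻¹ ∈ G₀ ↔ g ∈ G₀ := by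
        constructor
        · intro hm
          have := Subgroup.Normal.conj_mem ‹G₀.Normal› _ hm h⁻¹
          simpa [mul_assoc] using this
        · intro hm; exact Subgroup.Normal.conj_mem ‹G₀.Normal› _ hm h
      simp only [hmem, hcl g h]
    have := hequi _ hcont hcl'
    have hind : (fun g : G => if g ∈ G₀ then f g else 0) = Set.indicator (G₀ : Set G) f := by
      funext g; simp [Set.indicator_apply]
    rwa [hind, integral_indicator hG0meas] at this
  -- notation
  set k : ℕ → ℕ := fun N => ((Finset.range N).filter fun i => x i ∈ G₀).card with hk
  -- the measure of G₀
  have hμ0 : μ (G₀ : Set G) ≠ 0 := hopen.measure_ne_zero μ ⟨1, G₀.one_mem⟩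
  have hμt : μ (G₀ : Set G) ≠ ⊤ := measure_ne_top μ _
  set r : ℝ := (μ (G₀ : Set G)).toReal with hrdef
  have hr_pos : 0 < r := ENNReal.toReal_pos hμ0 hμt
  -- identify r with 1/index using the hypothesis hprop
  have hlim1 : Tendsto (fun N : ℕ => ((k N : ℝ) / (N : ℝ) : ℂ)) atTop (nhds (r : ℂ)) := by
    have h1 := keyInd (fun _ => (1 : ℂ)) continuous_const (fun _ _ => rfl)
    have hval : ∫ _ in (G₀ : Set G), (1 : ℂ) ∂μ = (r : ℂ) := by
      simp [setIntegral_const, hrdef, Complex.real_smul, measureReal_def]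
    rw [hval] at h1
    have heq : ∀ N : ℕ, ((k N : ℝ) / (N : ℝ) : ℂ)
        = (N : ℂ)⁻¹ * ∑ i ∈ Finset.range N, (if x i ∈ G₀ then (1 : ℂ) else 0) := by
      intro N
      rw [Finset.sum_boole]
      push_cast
      ring
    simpa only [heq] using h1
  have hprop' : Tendsto (fun N : ℕ => ((k N : ℝ) / (N : ℝ) : ℂ)) atTop
      (nhds ((1 / (G₀.index : ℝ) : ℝ) : ℂ)) := by
    refine Tendsto.congr (fun N => ?_) ((Complex.continuous_ofReal.tendsto _).comp hprop)
    simp only [Function.comp_apply]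
    push_cast
    ring
  have hr_eq : ((1 / (G₀.index : ℝ) : ℝ) : ℂ) = (r : ℂ) := tendsto_nhds_unique hprop' hlim1
  have h2 : Tendsto (fun N : ℕ => (k N : ℝ) / (N : ℝ)) atTop (nhds r) := by
    have : (1 / (G₀.index : ℝ)) = r := by exact_mod_cast hr_eq
    rwa [this] at hprop
  -- Haar uniqueness: μ₀ = (μ G₀)⁻¹ • μ.comap Subtype.val
  set c : Measure G₀ := μ.comap Subtype.val with hc
  haveI : c.IsMulLeftInvariant := by
    constructor
    intro g
    ext s hs
    rw [Measure.map_apply (measurable_const_mul g) hs, hemb.comap_apply, hemb.comap_apply]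
    have himg : (Subtype.val '' ((fun a => g * a) ⁻¹' s) : Set G)
        = (fun b : G => (g : G) * b) ⁻¹' (Subtype.val '' s) := by
      ext y
      constructor
      · rintro ⟨z, hz, rfl⟩
        exact ⟨g * z, hz, by push_cast; ring⟩
      · rintro ⟨w, hw, hwy⟩
        refine ⟨g⁻¹ * w, ?_, ?_⟩
        · show g * (g⁻¹ * w) ∈ s
          simpa [mul_assoc] using hw
        · show ((g⁻¹ : G₀) : G) * (w : G) = y
          rw [hwy]
          push_cast
          group
    rw [himg, measure_preimage_mul]
  haveI : IsFiniteMeasure c := ⟨by rw [hemb.comap_apply]; exact measure_lt_top μ _⟩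
  haveI : c.IsOpenPosMeasure := by
    constructor
    intro U hU hne
    rw [hemb.comap_apply]
    have hUo : IsOpen (Subtype.val '' U : Set G) := hopen.isOpenMap_subtype_val U hU
    exact hUo.measure_ne_zero μ (hne.image _)
  haveI : c.IsHaarMeasure := ⟨⟩
  set ν : Measure G₀ := (μ (G₀ : Set G))⁻¹ • c with hν
  haveI : ν.IsHaarMeasure :=
    Measure.IsHaarMeasure.smul c (ENNReal.inv_ne_zero.mpr hμt) (ENNReal.inv_ne_top.mpr hμ0)
  haveI : IsProbabilityMeasure ν := by
    constructor
    rw [hν, Measure.smul_apply, smul_eq_mul, hemb.comap_apply, Set.image_univ,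
      Subtype.range_coe, ENNReal.inv_mul_cancel hμ0 hμt]
  have hkey : μ₀ = ν := Measure.isHaarMeasure_eq_of_isProbabilityMeasure μ₀ ν
  have hmap : μ₀.map Subtype.val = (μ (G₀ : Set G))⁻¹ • μ.restrict (G₀ : Set G) := by
    rw [hkey, hν, Measure.map_smul, hemb.map_comap, Subtype.range_coe]
  -- now the main computation
  intro f hf hcl
  have hI : ∫ g, f g ∂(μ₀.map Subtype.val) = (r : ℂ)⁻¹ * ∫ g in (G₀ : Set G), f g ∂μ := by
    rw [hmap, integral_smul_measure, ENNReal.toReal_inv, ← hrdef, Complex.real_smul,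
      Complex.ofReal_inv]
  rw [hI]
  have hb := keyInd f hf hcl
  have ha : Tendsto (fun N : ℕ => ((k N : ℝ) / (N : ℝ) : ℂ)⁻¹) atTop (nhds (r : ℂ)⁻¹) :=
    hlim1.inv₀ (by exact_mod_cast hr_pos.ne')
  have hmain := ha.mul hb
  have hkpos : ∀ᶠ N : ℕ in atTop, 0 < (k N : ℝ) / (N : ℝ) :=
    h2.eventually (eventually_gt_nhds hr_pos)
  refine Tendsto.congr' ?_ hmain
  filter_upwards [hkpos] with N hN
  have hkne : (k N : ℝ) ≠ 0 := by
    intro h0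
    rw [h0] at hN; simp at hN
  have hNne : (N : ℝ) ≠ 0 := by
    intro h0
    rw [h0] at hN; simp at hN
  have hsum : ∑ i ∈ (Finset.range N).filter (fun i => x i ∈ G₀), f (x i)
      = ∑ i ∈ Finset.range N, (if x i ∈ G₀ then f (x i) else 0) :=
    Finset.sum_filter _ _
  rw [hsum]
  have hkC : (k N : ℂ) ≠ 0 := by exact_mod_cast hkne
  have hNC : (N : ℂ) ≠ 0 := by exact_mod_cast hNne
  change _ = ((k N : ℂ))⁻¹ * _
  push_cast
  field_simp
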